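/- arXiv:1709.00603 — 2 statements merged into one kernel-verified Lean document; each statement's English description precedes it below -/
import Mathlib

section
/- Let Φ be a crystallographic root system, let R ⊆ Φ be non-empty, and let Φ' be a root subsystem of Φ containing R. If W_{Φ'} = W_R, then L(Φ') = L(R) and L((Φ')^∨) = L(R^∨). -/
open RealInnerProductSpace Submodule
open scoped Classical

set_option linter.unusedSectionVars false
set_option linter.unusedVariables false
set_option maxHeartbeats 1000000

variable {V : Type*} [NormedAddCommGroup V] [InnerProductSpace ℝ V] [FiniteDimensional ℝ V]

/-- The orthogonal reflection in the hyperplane `α^⊥`. -/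
noncomputable def sRefl (α : V) : V ≃ₗᵢ[ℝ] V := reflection (ℝ ∙ α)ᗮ

/-- `Φ` is a root system in `V`. -/
def IsRootSystem (Φ : Set V) : Prop :=
  Φ.Finite ∧ (0 : V) ∉ Φ ∧ span ℝ Φ = ⊤ ∧
    (∀ α ∈ Φ, ∀ β ∈ Φ, sRefl α β ∈ Φ) ∧
    (∀ α ∈ Φ, ∀ r : ℝ, r • α ∈ Φ → r = 1 ∨ r = -1)

/-- `Φ` is crystallographic. -/
def IsCrystallographic (Φ : Set V) : Prop :=
  ∀ α ∈ Φ, ∀ β ∈ Φ, ∃ k : ℤ, 2 * ⟪α, β⟫ / ⟪α, α⟫ = (k : ℝ)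

/-- `Φ'` is a root subsystem of `Φ`. -/
def IsRootSubsystem (Φ Φ' : Set V) : Prop :=
  Φ' ⊆ Φ ∧ ∀ α ∈ Φ', ∀ β ∈ Φ', sRefl α β ∈ Φ'

/-- The coroot `α^∨ = 2α/(α|α)`. -/
noncomputable def coroot (α : V) : V := (2 / ⟪α, α⟫) • α

/-- The subgroup `W_R` of the orthogonal group of `V` generated by the reflections
`s_α`, `α ∈ R`. -/
noncomputable def weylGroup (R : Set V) : Subgroup (V ≃ₗᵢ[ℝ] V) :=
  Subgroup.closure (sRefl '' R)


lemma sRefl_apply (α x : V) (hα : α ≠ 0) :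
    sRefl α x = x - (2 * ⟪α, x⟫ / ⟪α, α⟫) • α := by
  have hαα : ⟪α, α⟫ ≠ 0 := inner_self_ne_zero.2 hα
  set c : ℝ := ⟪α, x⟫ / ⟪α, α⟫ with hc
  have hxa : x - c • α ∈ (ℝ ∙ α)ᗮ := by
    rw [Submodule.mem_orthogonal_singleton_iff_inner_right]
    rw [inner_sub_right, real_inner_smul_right]
    rw [hc, div_mul_cancel₀ _ hαα, sub_self]
  have hca : c • α ∈ ((ℝ ∙ α)ᗮ)ᗮ :=
    Submodule.le_orthogonal_orthogonal _
      (Submodule.smul_mem _ _ (Submodule.mem_span_singleton_self α))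
  have hsplit : sRefl α x = sRefl α (x - c • α) + sRefl α (c • α) := by
    rw [← map_add, sub_add_cancel]
  rw [hsplit, sRefl, reflection_mem_subspace_eq_self hxa,
    reflection_mem_subspace_orthogonalComplement_eq_neg hca]
  rw [hc]
  module

lemma sRefl_invol (α x : V) : sRefl α (sRefl α x) = x := reflection_reflection _ x

lemma lie_mul_apply (g h : V ≃ₗᵢ[ℝ] V) (x : V) : (g * h) x = g (h x) := rfl

lemma lie_one_apply (x : V) : (1 : V ≃ₗᵢ[ℝ] V) x = x := rfl

lemma sRefl_mul_self (α : V) : sRefl α * sRefl α = 1 := by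
  ext x
  exact sRefl_invol α x

lemma sRefl_inv (α : V) : (sRefl α)⁻¹ = sRefl α := by
  rw [inv_eq_iff_mul_eq_one, sRefl_mul_self]

lemma inv_apply_apply (g : V ≃ₗᵢ[ℝ] V) (x : V) : g (g⁻¹ x) = x := by
  rw [← lie_mul_apply, mul_inv_cancel, lie_one_apply]

lemma apply_inv_apply (g : V ≃ₗᵢ[ℝ] V) (x : V) : g⁻¹ (g x) = x := by
  rw [← lie_mul_apply, inv_mul_cancel, lie_one_apply]

lemma sRefl_self (α : V) (hα : α ≠ 0) : sRefl α α = -α := by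
  have hαα : ⟪α, α⟫ ≠ 0 := inner_self_ne_zero.2 hα
  rw [sRefl_apply α α hα, mul_div_assoc, div_self hαα, mul_one]
  module

lemma sRefl_adj (α : V) (hα : α ≠ 0) (u v : V) : ⟪sRefl α u, v⟫ = ⟪u, sRefl α v⟫ := by
  rw [sRefl_apply α u hα, sRefl_apply α v hα, inner_sub_left, inner_sub_right,
    real_inner_smul_left, real_inner_smul_right, real_inner_comm u α]
  ring

lemma sRefl_eq_neg_iff (α : V) (hα : α ≠ 0) (x : V) :
    sRefl α x = -x ↔ ∃ c : ℝ, x = c • α := by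
  constructor
  · intro h
    rw [sRefl_apply α x hα] at h
    set k : ℝ := 2 * ⟪α, x⟫ / ⟪α, α⟫ with hk
    have h2 : (2 : ℝ) • x = k • α := by
      have h3 : x = -x + k • α := sub_eq_iff_eq_add.1 h
      have h4 : x + x = k • α := by
        nth_rewrite 1 [h3]
        module
      rw [two_smul]
      exact h4
    refine ⟨2⁻¹ * k, ?_⟩
    calc x = (2:ℝ)⁻¹ • ((2:ℝ) • x) := by rw [smul_smul]; norm_num
      _ = (2:ℝ)⁻¹ • (k • α) := by rw [h2]
      _ = (2⁻¹ * k) • α := by rw [smul_smul]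
  · rintro ⟨c, rfl⟩
    rw [map_smul, sRefl_self α hα, smul_neg]

lemma coroot_neg (v : V) : coroot (-v) = -coroot v := by
  simp [coroot, inner_neg_neg]

lemma coroot_map (g : V ≃ₗᵢ[ℝ] V) (v : V) : g (coroot v) = coroot (g v) := by
  simp [coroot, LinearIsometryEquiv.inner_map_map]

lemma exists_generic (T : Set V) (hT : T.Finite) (h0 : (0 : V) ∉ T) :
    ∃ x : V, ∀ γ ∈ T, ⟪γ, x⟫ ≠ 0 := by
  by_contra hcon
  push_neg at hcon
  set s : Finset (Subspace ℝ V) := hT.toFinset.image (fun γ => (ℝ ∙ γ)ᗮ) with hs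
  have htop : ⊤ ∉ s := by
    intro htop
    rw [hs, Finset.mem_image] at htop
    obtain ⟨γ, hγ, hEq⟩ := htop
    rw [Set.Finite.mem_toFinset] at hγ
    have hγ0 : γ ≠ 0 := fun h => h0 (h ▸ hγ)
    have : γ ∈ (ℝ ∙ γ)ᗮ := by rw [hEq]; trivial
    rw [Submodule.mem_orthogonal_singleton_iff_inner_right] at this
    exact inner_self_ne_zero.2 hγ0 this
  apply Subspace.biUnion_ne_univ_of_top_notMem htop
  apply Set.eq_univ_of_forall
  intro x
  obtain ⟨γ, hγ, hinner⟩ := hcon x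
  rw [Set.mem_iUnion]
  refine ⟨(ℝ ∙ γ)ᗮ, ?_⟩
  rw [Set.mem_iUnion]
  refine ⟨Finset.mem_image.2 ⟨γ, Set.Finite.mem_toFinset _ |>.2 hγ, rfl⟩, ?_⟩
  rw [SetLike.mem_coe, Submodule.mem_orthogonal_singleton_iff_inner_right]
  exact hinner

lemma weyl_stab (Φ R : Set V) (hstab : ∀ α ∈ Φ, ∀ β ∈ Φ, sRefl α β ∈ Φ)
    (hRΦ : R ⊆ Φ) :
    ∀ w ∈ weylGroup R, ∀ γ ∈ Φ, w γ ∈ Φ := by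
  have main : ∀ w ∈ weylGroup R, (∀ γ ∈ Φ, w γ ∈ Φ) ∧ (∀ γ ∈ Φ, w⁻¹ γ ∈ Φ) := by
    intro w hw
    induction hw using Subgroup.closure_induction with
    | mem x hx =>
        obtain ⟨α, hα, rfl⟩ := hx
        rw [sRefl_inv]
        exact ⟨fun γ hγ => hstab α (hRΦ hα) γ hγ, fun γ hγ => hstab α (hRΦ hα) γ hγ⟩
    | one =>
        exact ⟨fun γ hγ => hγ, fun γ hγ => by rw [inv_one]; exact hγ⟩
    | mul x y hx hy px py =>
        refine ⟨fun γ hγ => ?_, fun γ hγ => ?_⟩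
        · rw [lie_mul_apply]; exact px.1 _ (py.1 _ hγ)
        · rw [mul_inv_rev, lie_mul_apply]; exact py.2 _ (px.2 _ hγ)
    | inv x hx px =>
        exact ⟨px.2, fun γ hγ => by rw [inv_inv]; exact px.1 γ hγ⟩
  exact fun w hw => (main w hw).1

lemma gen_move (Φ R : Set V) (hcr : IsCrystallographic Φ) (h0 : (0 : V) ∉ Φ)
    (hRΦ : R ⊆ Φ) (α : V) (hα : α ∈ R) (γ : V) (hγ : γ ∈ Φ) :
    sRefl α γ - γ ∈ span ℤ R := by
  have hα0 : α ≠ 0 := fun h => h0 (h ▸ hRΦ hα)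
  obtain ⟨k, hk⟩ := hcr α (hRΦ hα) γ hγ
  have : sRefl α γ - γ = -((k : ℝ) • α) := by
    rw [sRefl_apply α γ hα0, hk]
    module
  rw [this, Int.cast_smul_eq_zsmul]
  exact neg_mem (zsmul_mem (subset_span hα) k)

lemma gen_move_coroot (Φ R : Set V) (hcr : IsCrystallographic Φ) (h0 : (0 : V) ∉ Φ)
    (hRΦ : R ⊆ Φ) (α : V) (hα : α ∈ R) (γ : V) (hγ : γ ∈ Φ) :
    sRefl α (coroot γ) - coroot γ ∈ span ℤ (coroot '' R) := by
  have hα0 : α ≠ 0 := fun h => h0 (h ▸ hRΦ hα)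
  have hγ0 : γ ≠ 0 := fun h => h0 (h ▸ hγ)
  have hγγ : ⟪γ, γ⟫ ≠ 0 := inner_self_ne_zero.2 hγ0
  have hαα : ⟪α, α⟫ ≠ 0 := inner_self_ne_zero.2 hα0
  obtain ⟨k, hk⟩ := hcr γ hγ α (hRΦ hα)
  have key : sRefl α (coroot γ) - coroot γ = -((k : ℝ) • coroot α) := by
    rw [← hk, coroot, coroot, sRefl_apply α _ hα0, real_inner_smul_right, smul_smul]
    have hcomm : ⟪α, γ⟫ = ⟪γ, α⟫ := by rw [real_inner_comm]
    have hsc : 2 * ⟪γ, α⟫ / ⟪γ, γ⟫ * (2 / ⟪α, α⟫)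
        = 2 * (2 / ⟪γ, γ⟫ * ⟪α, γ⟫) / ⟪α, α⟫ := by
      rw [hcomm]
      field_simp
    rw [hsc]
    module
  rw [key, Int.cast_smul_eq_zsmul]
  exact neg_mem (zsmul_mem (subset_span (Set.mem_image_of_mem coroot hα)) k)

lemma weyl_move (Φ R : Set V) (hΦ : IsRootSystem Φ) (hcr : IsCrystallographic Φ)
    (hRΦ : R ⊆ Φ) :
    ∀ w ∈ weylGroup R, ∀ γ ∈ Φ,
      w γ - γ ∈ span ℤ R ∧ w (coroot γ) - coroot γ ∈ span ℤ (coroot '' R) := by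
  obtain ⟨hfin, h0, -, hstab, -⟩ := hΦ
  have hws := weyl_stab Φ R hstab hRΦ
  have main : ∀ w ∈ weylGroup R,
      (∀ γ ∈ Φ, w γ - γ ∈ span ℤ R ∧ w (coroot γ) - coroot γ ∈ span ℤ (coroot '' R)) ∧
      (∀ γ ∈ Φ, w⁻¹ γ - γ ∈ span ℤ R ∧ w⁻¹ (coroot γ) - coroot γ ∈ span ℤ (coroot '' R)) := by
    intro w hw
    induction hw using Subgroup.closure_induction with
    | mem x hx =>
        obtain ⟨α, hα, rfl⟩ := hx
        rw [sRefl_inv]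
        exact ⟨fun γ hγ => ⟨gen_move Φ R hcr h0 hRΦ α hα γ hγ,
            gen_move_coroot Φ R hcr h0 hRΦ α hα γ hγ⟩,
          fun γ hγ => ⟨gen_move Φ R hcr h0 hRΦ α hα γ hγ,
            gen_move_coroot Φ R hcr h0 hRΦ α hα γ hγ⟩⟩
    | one =>
        refine ⟨fun γ hγ => ⟨?_, ?_⟩, fun γ hγ => ⟨?_, ?_⟩⟩ <;>
          simp [lie_one_apply]
    | mul x y hx hy px py =>
        have hxW : x ∈ weylGroup R := hx
        have hyW : y ∈ weylGroup R := hy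
        refine ⟨fun γ hγ => ?_, fun γ hγ => ?_⟩
        · have hyγ : y γ ∈ Φ := hws y hyW γ hγ
          constructor
          · rw [lie_mul_apply]
            have h1 := (px.1 (y γ) hyγ).1
            have h2 := (py.1 γ hγ).1
            have heq : x (y γ) - γ = (x (y γ) - y γ) + (y γ - γ) := by abel
            rw [heq]; exact add_mem h1 h2
          · rw [lie_mul_apply]
            have h1 := (px.1 (y γ) hyγ).2
            have h2 := (py.1 γ hγ).2
            rw [coroot_map] at h2
            have heq0 : x (y (coroot γ)) = x (coroot (y γ)) := by rw [coroot_map y γ]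
            have heq : x (y (coroot γ)) - coroot γ
                = (x (coroot (y γ)) - coroot (y γ)) + (coroot (y γ) - coroot γ) := by
              rw [heq0]; abel
            rw [heq]; exact add_mem h1 h2
        · have hxγ : x⁻¹ γ ∈ Φ := hws x⁻¹ (inv_mem hxW) γ hγ
          rw [mul_inv_rev]
          constructor
          · rw [lie_mul_apply]
            have h1 := (py.2 (x⁻¹ γ) hxγ).1
            have h2 := (px.2 γ hγ).1
            have heq : y⁻¹ (x⁻¹ γ) - γ = (y⁻¹ (x⁻¹ γ) - x⁻¹ γ) + (x⁻¹ γ - γ) := by abel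
            rw [heq]; exact add_mem h1 h2
          · rw [lie_mul_apply]
            have h1 := (py.2 (x⁻¹ γ) hxγ).2
            have h2 := (px.2 γ hγ).2
            rw [coroot_map] at h2
            have heq0 : y⁻¹ (x⁻¹ (coroot γ)) = y⁻¹ (coroot (x⁻¹ γ)) := by
              rw [coroot_map x⁻¹ γ]
            have heq : y⁻¹ (x⁻¹ (coroot γ)) - coroot γ
                = (y⁻¹ (coroot (x⁻¹ γ)) - coroot (x⁻¹ γ)) + (coroot (x⁻¹ γ) - coroot γ) := by
              rw [heq0]; abel
            rw [heq]; exact add_mem h1 h2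
    | inv x hx px =>
        exact ⟨px.2, fun γ hγ => by rw [inv_inv]; exact px.1 γ hγ⟩
  exact fun w hw γ hγ => (main w hw).1 γ hγ

lemma sign_aux (S : Finset V) (x₀ : V) (hgen : ∀ γ ∈ S, ⟪γ, x₀⟫ ≠ 0)
    (hsym : ∀ γ ∈ S, -γ ∈ S)
    (t : V ≃ₗᵢ[ℝ] V) (ht : ∀ γ ∈ S, t γ ∈ S)
    (hti : ∀ x : V, t (t x) = x) (hta : ∀ u v : V, ⟪t u, v⟫ = ⟪u, t v⟫) (x : V) :
    ∏ γ ∈ S.filter (fun γ => 0 < ⟪γ, x₀⟫), ⟪γ, t x⟫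
      = (-1 : ℝ) ^ ((S.filter (fun γ => 0 < ⟪γ, x₀⟫ ∧ t γ = -γ)).card) *
        ∏ γ ∈ S.filter (fun γ => 0 < ⟪γ, x₀⟫), ⟪γ, x⟫ := by
  set Sp := S.filter (fun γ => 0 < ⟪γ, x₀⟫) with hSp
  set m : V → V := fun γ => if 0 < ⟪t γ, x₀⟫ then t γ else -(t γ) with hm
  set ε : V → ℝ := fun γ => if 0 < ⟪t γ, x₀⟫ then 1 else -1 with hε
  have hmemSp : ∀ γ, γ ∈ Sp ↔ γ ∈ S ∧ 0 < ⟪γ, x₀⟫ := by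
    intro γ; simp [hSp]
  have hmSp : ∀ γ ∈ Sp, m γ ∈ Sp := by
    intro γ hγ
    rw [hmemSp] at hγ ⊢
    have htγS : t γ ∈ S := ht γ hγ.1
    by_cases hpos : 0 < ⟪t γ, x₀⟫
    · simp only [hm, if_pos hpos]; exact ⟨htγS, hpos⟩
    · have hne := hgen _ htγS
      have hneg : ⟪t γ, x₀⟫ < 0 := lt_of_le_of_ne (not_lt.1 hpos) hne
      simp only [hm, if_neg hpos]
      exact ⟨hsym _ htγS, by rwa [inner_neg_left, neg_pos]⟩
  have hmm : ∀ γ ∈ Sp, m (m γ) = γ := by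
    intro γ hγ
    rw [hmemSp] at hγ
    by_cases hpos : 0 < ⟪t γ, x₀⟫
    · have h1 : m γ = t γ := by simp [hm, if_pos hpos]
      have h2 : t (m γ) = γ := by rw [h1, hti]
      have : 0 < ⟪t (m γ), x₀⟫ := by rw [h2]; exact hγ.2
      show (if 0 < ⟪t (m γ), x₀⟫ then t (m γ) else -(t (m γ))) = γ
      rw [if_pos this, h2]
    · have h1 : m γ = -(t γ) := by simp [hm, if_neg hpos]
      have h2 : t (m γ) = -γ := by rw [h1, map_neg, hti]
      have : ¬ 0 < ⟪t (m γ), x₀⟫ := by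
        rw [h2, inner_neg_left]; simpa using le_of_lt hγ.2
      have hc : ¬ 0 < ⟪(-γ : V), x₀⟫ := by
        rw [inner_neg_left]; simpa using le_of_lt hγ.2
      show (if 0 < ⟪t (m γ), x₀⟫ then t (m γ) else -(t (m γ))) = γ
      rw [h2, if_neg hc, neg_neg]
  -- step 0 : adjoint
  have step0 : ∏ γ ∈ Sp, ⟪γ, t x⟫ = ∏ γ ∈ Sp, ⟪t γ, x⟫ :=
    Finset.prod_congr rfl (fun γ _ => (hta γ x).symm)
  -- step 1: pointwise factor
  have step1 : ∏ γ ∈ Sp, ⟪t γ, x⟫ = (∏ γ ∈ Sp, ε γ) * ∏ γ ∈ Sp, ⟪m γ, x⟫ := by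
    rw [← Finset.prod_mul_distrib]
    refine Finset.prod_congr rfl (fun γ _ => ?_)
    by_cases hpos : 0 < ⟪t γ, x₀⟫
    · simp [hm, hε, if_pos hpos]
    · simp [hm, hε, if_neg hpos, inner_neg_left]
  -- step 2: reindex
  have step2 : ∏ γ ∈ Sp, ⟪m γ, x⟫ = ∏ γ ∈ Sp, ⟪γ, x⟫ := by
    refine Finset.prod_nbij' m m hmSp hmSp hmm hmm (fun γ _ => rfl)
  -- step 3: sign count
  have step3 : ∏ γ ∈ Sp, ε γ
      = (-1 : ℝ) ^ ((Sp.filter (fun γ => t γ = -γ)).card) := by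
    rw [← Finset.prod_filter_mul_prod_filter_not Sp (fun γ => t γ = -γ) ε]
    have hF : ∏ γ ∈ Sp.filter (fun γ => t γ = -γ), ε γ
        = (-1 : ℝ) ^ ((Sp.filter (fun γ => t γ = -γ)).card) := by
      rw [← Finset.prod_const]
      refine Finset.prod_congr rfl (fun γ hγ => ?_)
      rw [Finset.mem_filter] at hγ
      have hpos : 0 < ⟪γ, x₀⟫ := ((hmemSp γ).1 hγ.1).2
      have : ¬ 0 < ⟪t γ, x₀⟫ := by
        rw [hγ.2, inner_neg_left]; simpa using le_of_lt hpos
      simp [hε, if_neg this]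
    have hG : ∏ γ ∈ Sp.filter (fun γ => ¬ t γ = -γ), ε γ = 1 := by
      refine Finset.prod_involution (fun γ _ => if 0 < ⟪t γ, x₀⟫ then γ else -(t γ))
        ?_ ?_ ?_ ?_
      · intro γ hγ
        rw [Finset.mem_filter] at hγ
        by_cases hpos : 0 < ⟪t γ, x₀⟫
        · simp [hε, if_pos hpos]
        · have hS : γ ∈ S := ((hmemSp γ).1 hγ.1).1
          have h2 : t (-(t γ)) = -γ := by rw [map_neg, hti]
          have hpos' : 0 < ⟪γ, x₀⟫ := ((hmemSp γ).1 hγ.1).2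
          have : ¬ 0 < ⟪t (-(t γ)), x₀⟫ := by
            rw [h2, inner_neg_left]; simpa using le_of_lt hpos'
          simp [hε, if_neg hpos, if_neg this]
      · intro γ hγ hne
        by_cases hpos : 0 < ⟪t γ, x₀⟫
        · exfalso; apply hne; simp [hε, if_pos hpos]
        · rw [Finset.mem_filter] at hγ
          simp only [if_neg hpos]
          intro heq
          exact hγ.2 (neg_eq_iff_eq_neg.1 heq)
      · intro γ hγ
        rw [Finset.mem_filter] at hγ
        by_cases hpos : 0 < ⟪t γ, x₀⟫
        · simp only [if_pos hpos]; exact Finset.mem_filter.2 hγ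
        · simp only [if_neg hpos]
          refine Finset.mem_filter.2 ⟨?_, ?_⟩
          · have h1 : m γ = -(t γ) := by simp [hm, if_neg hpos]
            rw [← h1]; exact hmSp γ hγ.1
          · rw [map_neg, hti]
            intro heq
            rw [neg_neg] at heq
            exact hγ.2 heq.symm
      · intro γ hγ
        rw [Finset.mem_filter] at hγ
        by_cases hpos : 0 < ⟪t γ, x₀⟫
        · simp only [if_pos hpos]
        · simp only [if_neg hpos]
          have h2 : t (-(t γ)) = -γ := by rw [map_neg, hti]
          have hpos' : 0 < ⟪γ, x₀⟫ := ((hmemSp γ).1 hγ.1).2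
          have : ¬ 0 < ⟪t (-(t γ)), x₀⟫ := by
            rw [h2, inner_neg_left]; simpa using le_of_lt hpos'
          rw [if_neg this, h2, neg_neg]
    rw [hF, hG, mul_one]
  have hfilt : Sp.filter (fun γ => t γ = -γ)
      = S.filter (fun γ => 0 < ⟪γ, x₀⟫ ∧ t γ = -γ) := by
    rw [hSp, Finset.filter_filter]
  rw [step0, step1, step2, step3, hfilt]

lemma key_parallel (Φ R : Set V) (hΦ : IsRootSystem Φ) (hRΦ : R ⊆ Φ)
    {β : V} (hβ : β ∈ Φ) (hsβ : sRefl β ∈ weylGroup R) :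
    ∃ w ∈ weylGroup R, ∃ α ∈ R, β = w α ∨ β = -(w α) := by
  obtain ⟨hfin, h0, -, hstab, hred⟩ := hΦ
  have hws := weyl_stab Φ R hstab hRΦ
  have hβ0 : β ≠ 0 := fun h => h0 (h ▸ hβ)
  by_contra hcon
  push_neg at hcon
  set Sig : Set V := {v | ∃ w ∈ weylGroup R, ∃ α ∈ R, v = w α} with hSig
  set D : Set V := {v | (∃ w ∈ weylGroup R, v = w β) ∧ v ∉ Sig} with hD
  have hDΦ : D ⊆ Φ := by rintro v ⟨⟨w, hw, rfl⟩, -⟩; exact hws w hw β hβ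
  have hDfin : D.Finite := hfin.subset hDΦ
  set S : Finset V := hDfin.toFinset with hS
  have hmemS : ∀ v, v ∈ S ↔ v ∈ D := fun v => Set.Finite.mem_toFinset _
  have hDstab : ∀ w ∈ weylGroup R, ∀ v ∈ D, w v ∈ D := by
    intro w hw v hv
    obtain ⟨⟨u, hu, rfl⟩, hvS⟩ := hv
    refine ⟨⟨w * u, mul_mem hw hu, (lie_mul_apply w u β).symm⟩, ?_⟩
    rintro ⟨u', hu', α, hα, hEq⟩
    apply hvS
    refine ⟨w⁻¹ * u', mul_mem (inv_mem hw) hu', α, hα, ?_⟩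
    rw [lie_mul_apply, ← hEq, apply_inv_apply]
  have hDneg : ∀ v ∈ D, -v ∈ D := by
    intro v hv
    obtain ⟨⟨u, hu, rfl⟩, hvS⟩ := hv
    constructor
    · refine ⟨u * sRefl β, mul_mem hu hsβ, ?_⟩
      rw [lie_mul_apply, sRefl_self β hβ0, map_neg]
    · rintro ⟨u', hu', α, hα, hEq⟩
      apply hvS
      have hα0 : α ≠ 0 := fun h => h0 (h ▸ hRΦ hα)
      refine ⟨u' * sRefl α, mul_mem hu' (Subgroup.subset_closure ⟨α, hα, rfl⟩), α, hα, ?_⟩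
      rw [lie_mul_apply, sRefl_self α hα0, map_neg, ← hEq, neg_neg]
  have hβD : β ∈ D := by
    constructor
    · exact ⟨1, one_mem _, rfl⟩
    · rintro ⟨w, hw, α, hα, hEq⟩
      exact (hcon w hw α hα).1 hEq
  obtain ⟨x₀, hx₀⟩ := exists_generic Φ hfin h0
  have hgen : ∀ γ ∈ S, ⟪γ, x₀⟫ ≠ 0 := fun γ hγ => hx₀ γ (hDΦ ((hmemS γ).1 hγ))
  have hsymS : ∀ γ ∈ S, -γ ∈ S := fun γ hγ => (hmemS _).2 (hDneg γ ((hmemS γ).1 hγ))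
  set P : V → ℝ := fun x => ∏ γ ∈ S.filter (fun γ => 0 < ⟪γ, x₀⟫), ⟪γ, x⟫ with hP
  have hinv : ∀ w ∈ weylGroup R, ∀ x, P (w x) = P x := by
    intro w hw
    induction hw using Subgroup.closure_induction with
    | mem t htm =>
        obtain ⟨α, hα, rfl⟩ := htm
        intro x
        have hα0 : α ≠ 0 := fun h => h0 (h ▸ hRΦ hα)
        have hsαW : sRefl α ∈ weylGroup R := Subgroup.subset_closure ⟨α, hα, rfl⟩
        have htS : ∀ γ ∈ S, sRefl α γ ∈ S := fun γ hγ =>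
          (hmemS _).2 (hDstab _ hsαW γ ((hmemS γ).1 hγ))
        have hkey := sign_aux S x₀ hgen hsymS (sRefl α) htS (sRefl_invol α) (sRefl_adj α hα0) x
        have hflip : S.filter (fun γ => 0 < ⟪γ, x₀⟫ ∧ sRefl α γ = -γ) = ∅ := by
          rw [Finset.filter_eq_empty_iff]
          intro γ hγ
          rintro ⟨-, hneg⟩
          obtain ⟨c, hc⟩ := (sRefl_eq_neg_iff α hα0 γ).1 hneg
          have hγΦ : γ ∈ Φ := hDΦ ((hmemS γ).1 hγ)
          have hγD : γ ∈ D := (hmemS γ).1 hγ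
          have hαSig : α ∈ Sig := ⟨1, one_mem _, α, hα, rfl⟩
          rcases hred α (hRΦ hα) c (by rw [← hc]; exact hγΦ) with h1 | h1
          · rw [h1, one_smul] at hc
            exact hγD.2 (hc ▸ hαSig)
          · rw [h1, neg_one_smul] at hc
            have : -γ ∈ D := hDneg γ hγD
            apply this.2
            rw [hc, neg_neg]
            exact hαSig
        simp only [hP]
        rw [hkey, hflip]
        simp
    | one => intro x; rfl
    | mul g h hg hh pg ph =>
        intro z
        rw [lie_mul_apply, pg, ph]
    | inv g hg pg =>
        intro z
        have := pg (g⁻¹ z)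
        rw [inv_apply_apply] at this
        exact this.symm
  have h1 : ∀ x, P (sRefl β x) = P x := hinv _ hsβ
  have hβS : β ∈ S := (hmemS β).2 hβD
  have htSβ : ∀ γ ∈ S, sRefl β γ ∈ S := fun γ hγ =>
    (hmemS _).2 (hDstab _ hsβ γ ((hmemS γ).1 hγ))
  have hflipβ : S.filter (fun γ => 0 < ⟪γ, x₀⟫ ∧ sRefl β γ = -γ)
      = {if 0 < ⟪β, x₀⟫ then β else -β} := by
    ext γ
    simp only [Finset.mem_filter, Finset.mem_singleton]
    constructor
    · rintro ⟨hγS, hpos, hneg⟩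
      obtain ⟨c, hc⟩ := (sRefl_eq_neg_iff β hβ0 γ).1 hneg
      have hγΦ : γ ∈ Φ := hDΦ ((hmemS γ).1 hγS)
      rcases hred β hβ c (by rw [← hc]; exact hγΦ) with h1 | h1
      · rw [h1, one_smul] at hc
        rw [hc] at hpos
        rw [if_pos hpos]
        exact hc
      · rw [h1, neg_one_smul] at hc
        rw [hc, inner_neg_left] at hpos
        rw [if_neg (by linarith)]
        exact hc
    · intro hEq
      by_cases hpos : 0 < ⟪β, x₀⟫
      · rw [if_pos hpos] at hEq
        rw [hEq]
        exact ⟨hβS, hpos, sRefl_self β hβ0⟩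
      · rw [if_neg hpos] at hEq
        rw [hEq]
        refine ⟨hsymS β hβS, ?_, ?_⟩
        · rw [inner_neg_left]
          have := hx₀ β hβ
          cases lt_or_gt_of_ne this with
          | inl h => linarith
          | inr h => exact absurd h hpos
        · rw [map_neg, sRefl_self β hβ0]
  have h2 := sign_aux S x₀ hgen hsymS (sRefl β) htSβ (sRefl_invol β) (sRefl_adj β hβ0) x₀
  rw [hflipβ, Finset.card_singleton] at h2
  have h4 : P x₀ = 0 := by
    have hthis := h1 x₀
    simp only [hP] at hthis ⊢
    rw [h2, pow_one, neg_one_mul] at hthis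
    linarith
  have h5 : P x₀ ≠ 0 := by
    simp only [hP]
    apply Finset.prod_ne_zero_iff.2
    intro γ hγ
    exact hgen γ (Finset.mem_filter.1 hγ).1
  exact h5 h4

theorem stmt_1 (Φ R Φ' : Set V) (hΦ : IsRootSystem Φ) (hcr : IsCrystallographic Φ)
    (hRΦ : R ⊆ Φ) (hRne : R.Nonempty)
    (hsub : IsRootSubsystem Φ Φ') (hRΦ' : R ⊆ Φ')
    (hW : weylGroup Φ' = weylGroup R) :
    span ℤ Φ' = span ℤ R ∧ span ℤ (coroot '' Φ') = span ℤ (coroot '' R) := by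
  have hΦ'Φ := hsub.1
  have hkey : ∀ β ∈ Φ', ∃ w ∈ weylGroup R, ∃ α ∈ R, β = w α ∨ β = -(w α) := by
    intro β hβ
    have hmem : sRefl β ∈ weylGroup Φ' := Subgroup.subset_closure ⟨β, hβ, rfl⟩
    rw [hW] at hmem
    exact key_parallel Φ R hΦ hRΦ (hΦ'Φ hβ) hmem
  have hmv := weyl_move Φ R hΦ hcr hRΦ
  constructor
  · apply le_antisymm
    · rw [span_le]
      intro β hβ
      obtain ⟨w, hw, α, hα, hc⟩ := hkey β hβ
      have hαΦ : α ∈ Φ := hRΦ hα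
      have h1 : w α - α ∈ span ℤ R := (hmv w hw α hαΦ).1
      have h2 : w α ∈ span ℤ R := by
        have heq : w α = (w α - α) + α := by abel
        rw [heq]; exact add_mem h1 (subset_span hα)
      show β ∈ span ℤ R
      rcases hc with h | h
      · rw [h]; exact h2
      · rw [h]; exact neg_mem h2
    · exact span_mono hRΦ'
  · apply le_antisymm
    · rw [span_le]
      rintro x ⟨β, hβ, rfl⟩
      obtain ⟨w, hw, α, hα, hc⟩ := hkey β hβ
      have hαΦ : α ∈ Φ := hRΦ hα
      have h1 : w (coroot α) - coroot α ∈ span ℤ (coroot '' R) := (hmv w hw α hαΦ).2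
      have h2 : coroot (w α) ∈ span ℤ (coroot '' R) := by
        rw [← coroot_map]
        have heq : w (coroot α) = (w (coroot α) - coroot α) + coroot α := by abel
        rw [heq]
        exact add_mem h1 (subset_span (Set.mem_image_of_mem coroot hα))
      show coroot β ∈ span ℤ (coroot '' R)
      rcases hc with h | h
      · rw [h]; exact h2
      · rw [h, coroot_neg]; exact neg_mem h2
    · exact span_mono (Set.image_mono hRΦ')
end

section
/- Let (W, S) be a Coxeter system of type H_3 with S = {s_1, s_2, s_3}, where s_1 and s_3 commute (i.e. s_1 s_3 has order 2), s_1 s_2 has order 5, and s_2 s_3 has order 3. Let P = ⟨s_1, s_3⟩. Then ⟨P, s_2⟩ = W and ⟨P, s_2 s_1 s_2⟩ = W, but there is no p ∈ P with p s_2 p^{-1} = s_2 s_1 s_2; that is, s_2 and s_2 s_1 s_2 are not conjugate under P. -/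
/-- The Coxeter matrix of type `H₃`, with `m 0 1 = 5`, `m 1 2 = 3`, `m 0 2 = 2`. -/
def H3Matrix : CoxeterMatrix (Fin 3) where
  M := !![1, 5, 2; 5, 1, 3; 2, 3, 1]
  off_diagonal := by intro i i'; fin_cases i <;> fin_cases i' <;> simp

/-- A representation of the `H₃` Coxeter group in `S₅` (landing in `A₅`). -/
def h3Perm : Fin 3 → Equiv.Perm (Fin 5) :=
  ![c[1, 2] * c[3, 4], c[0, 1] * c[2, 3], c[1, 4] * c[2, 3]]

set_option maxRecDepth 10000 in
lemma h3Perm_liftable : ∀ i i' : Fin 3, (h3Perm i * h3Perm i') ^ H3Matrix i i' = 1 := by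
  decide

theorem stmt_15 (W : Type*) [Group W] (cs : CoxeterSystem H3Matrix W)
    (P : Subgroup W) (hP : P = Subgroup.closure {cs.simple 0, cs.simple 2}) :
    P ⊔ Subgroup.closure {cs.simple 1} = ⊤ ∧
      P ⊔ Subgroup.closure {cs.simple 1 * cs.simple 0 * cs.simple 1} = ⊤ ∧
      ¬∃ p ∈ P, p * cs.simple 1 * p⁻¹ = cs.simple 1 * cs.simple 0 * cs.simple 1 := by
  set a := cs.simple 0 with ha_def
  set b := cs.simple 1 with hb_def
  set c := cs.simple 2 with hc_def
  have haa : a * a = 1 := cs.simple_mul_simple_self 0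
  have hbb : b * b = 1 := cs.simple_mul_simple_self 1
  have hcc : c * c = 1 := cs.simple_mul_simple_self 2
  have hainv : a⁻¹ = a := inv_eq_of_mul_eq_one_left haa
  have hcinv : c⁻¹ = c := inv_eq_of_mul_eq_one_left hcc
  have hac : a * c * (a * c) = 1 := by
    have h := cs.simple_mul_simple_pow 0 2
    rw [show H3Matrix 0 2 = 2 from rfl, pow_two] at h
    exact h
  have hab5 : (a * b) ^ 5 = 1 := by
    have h := cs.simple_mul_simple_pow 0 1
    rwa [show H3Matrix 0 1 = 5 from rfl] at h
  have hca : c * a = a * c := by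
    have h := inv_eq_of_mul_eq_one_left hac
    rw [mul_inv_rev, hainv, hcinv] at h
    exact h
  have haa' : ∀ x : W, a * (a * x) = x := fun x => by rw [← mul_assoc, haa, one_mul]
  have hcc' : ∀ x : W, c * (c * x) = x := fun x => by rw [← mul_assoc, hcc, one_mul]
  have hca' : ∀ x : W, c * (a * x) = a * (c * x) := fun x => by
    rw [← mul_assoc, hca, mul_assoc]
  have haP : a ∈ P := by rw [hP]; exact Subgroup.subset_closure (by simp)
  have hcP : c ∈ P := by rw [hP]; exact Subgroup.subset_closure (by simp)
  refine ⟨?_, ?_, ?_⟩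
  · apply top_unique
    rw [← cs.subgroup_closure_range_simple]
    apply (Subgroup.closure_le _).mpr
    rintro x ⟨i, rfl⟩
    fin_cases i
    · exact Subgroup.mem_sup_left haP
    · exact Subgroup.mem_sup_right (Subgroup.subset_closure rfl)
    · exact Subgroup.mem_sup_left hcP
  · apply top_unique
    rw [← cs.subgroup_closure_range_simple]
    apply (Subgroup.closure_le _).mpr
    rintro x ⟨i, rfl⟩
    have ht : b * a * b ∈ P ⊔ Subgroup.closure {b * a * b} :=
      Subgroup.mem_sup_right (Subgroup.subset_closure rfl)
    have haJ : a ∈ P ⊔ Subgroup.closure {b * a * b} := Subgroup.mem_sup_left haP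
    have hbJ : b ∈ P ⊔ Subgroup.closure {b * a * b} := by
      have hat : a * (b * a * b) = (a * b) ^ 2 := by
        rw [pow_two]; simp only [mul_assoc]
      have key : b = a * (a * (b * a * b)) ^ 3 := by
        rw [hat, ← pow_mul, show (2 * 3 : ℕ) = 5 + 1 from rfl, pow_succ, hab5, one_mul,
          ← mul_assoc, haa, one_mul]
      have hm := mul_mem haJ (pow_mem (mul_mem haJ ht) 3)
      rwa [← key] at hm
    fin_cases i
    · exact haJ
    · exact hbJ
    · exact Subgroup.mem_sup_left hcP
  · rintro ⟨p, hpP, hpeq⟩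
    have hacac : (a * c)⁻¹ = a * c := by rw [mul_inv_rev, hainv, hcinv, hca]
    have hmem : p = 1 ∨ p = a ∨ p = c ∨ p = a * c := by
      rw [hP] at hpP
      clear hpeq
      induction hpP using Subgroup.closure_induction with
      | mem x hx =>
        simp only [Set.mem_insert_iff, Set.mem_singleton_iff] at hx
        rcases hx with rfl | rfl
        · tauto
        · tauto
      | one => tauto
      | mul x y hx hy ihx ihy =>
        rcases ihx with rfl | rfl | rfl | rfl <;> rcases ihy with rfl | rfl | rfl | rfl <;>
          simp [mul_assoc, haa', hcc', hca', haa, hcc, hca]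
      | inv x hx ihx =>
        rcases ihx with rfl | rfl | rfl | rfl <;> simp [hainv, hcinv, hacac]
    set ρ := cs.lift ⟨h3Perm, h3Perm_liftable⟩ with hρ
    have hρa : ρ a = h3Perm 0 := cs.lift_apply_simple h3Perm_liftable 0
    have hρb : ρ b = h3Perm 1 := cs.lift_apply_simple h3Perm_liftable 1
    have hρc : ρ c = h3Perm 2 := cs.lift_apply_simple h3Perm_liftable 2
    have himg := congrArg ρ hpeq
    rcases hmem with rfl | rfl | rfl | rfl <;>
      simp only [map_mul, map_one, map_inv, hρa, hρb, hρc, one_mul, mul_one, inv_one] at himg <;>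
      exact absurd himg (by decide)
end
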